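/- arXiv:2211.07739 — 4 statements merged into one kernel-verified Lean document; each statement's English description precedes it below -/
import Mathlib

section
/- Let p be a prime, let f(X) = a_r X^{n_r} + ... + a_1 X^{n_1} ∈ F_p[X] with nonzero coefficients a_1, ..., a_r ∈ F_p^* and integer exponents n_r > ... > n_1 ≥ 1, and let G ⊆ F_p^* be a subgroup of order τ. Then for any positive integers k and ℓ, |S(G;f)|^{2kℓ} ≤ p^r · τ^{2kℓ − 2k − 2ℓ} · Q_k(n⃗;G) · Q_ℓ(n⃗;G), where n⃗ = (n_1, ..., n_r). -/
open scoped Classical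

/-- `e_p(z) = exp(2πi z / p)`. -/
noncomputable def eP (p : ℕ) (z : ZMod p) : ℂ :=
  Complex.exp (2 * Real.pi * Complex.I * (z.val : ℂ) / (p : ℂ))

/-- `Q_k(n⃗; G)`: the number of `2k`-tuples `(g_1,…,g_{2k}) ∈ G^{2k}` with
`g_1^{n_i} + ⋯ + g_k^{n_i} = g_{k+1}^{n_i} + ⋯ + g_{2k}^{n_i}` for every `i`. -/
noncomputable def Qsys (p : ℕ) (G : Subgroup (ZMod p)ˣ) (k : ℕ) {r : ℕ} (nv : Fin r → ℕ) : ℕ :=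
  Nat.card {gh : (Fin k → G) × (Fin k → G) //
    ∀ i : Fin r, ∑ j, ((gh.1 j : (ZMod p)ˣ) : ZMod p) ^ nv i
      = ∑ j, ((gh.2 j : (ZMod p)ˣ) : ZMod p) ^ nv i}

namespace WeilAux

variable {p : ℕ} [hp : Fact p.Prime]

noncomputable def ζp (p : ℕ) : ℂ := Complex.exp (2 * Real.pi * Complex.I / p)

lemma eP_eq_zeta_pow (z : ZMod p) : eP p z = ζp p ^ z.val := by
  rw [ζp, ← Complex.exp_nat_mul, eP]
  congr 1
  ring

lemma zeta_prim : IsPrimitiveRoot (ζp p) p :=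
  Complex.isPrimitiveRoot_exp p hp.out.ne_zero

lemma eP_zero : eP p 0 = 1 := by
  haveI : NeZero p := ⟨hp.out.ne_zero⟩
  simp [eP]

lemma eP_add (x y : ZMod p) : eP p (x + y) = eP p x * eP p y := by
  haveI : NeZero p := ⟨hp.out.ne_zero⟩
  have hζ : ζp p ^ p = 1 := (zeta_prim (p := p)).pow_eq_one
  rw [eP_eq_zeta_pow, eP_eq_zeta_pow, eP_eq_zeta_pow, ← pow_add]
  have h : x.val + y.val = (x + y).val + p * ((x.val + y.val) / p) := by
    rw [ZMod.val_add]
    exact (Nat.mod_add_div _ _).symm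
  rw [h, pow_add, pow_mul, hζ, one_pow, mul_one]

lemma eP_sum {ι : Type*} (s : Finset ι) (f : ι → ZMod p) :
    eP p (∑ i ∈ s, f i) = ∏ i ∈ s, eP p (f i) := by
  induction s using Finset.cons_induction with
  | empty => simpa using eP_zero
  | cons i s hi ih => rw [Finset.sum_cons, Finset.prod_cons, eP_add, ih]

lemma eP_ne_zero (z : ZMod p) : eP p z ≠ 0 := Complex.exp_ne_zero _

lemma abs_eP (z : ZMod p) : ‖eP p z‖ = 1 := by
  rw [eP, Complex.norm_exp]
  have h : 2 * (Real.pi : ℂ) * Complex.I * (z.val : ℂ) / (p : ℂ)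
      = ((2 * Real.pi * (z.val : ℝ) / (p : ℝ) : ℝ) : ℂ) * Complex.I := by
    push_cast
    ring
  rw [h]
  simp [Complex.mul_I_re]

lemma conj_eP (z : ZMod p) : (starRingEnd ℂ) (eP p z) = eP p (-z) := by
  have h1 : eP p z * eP p (-z) = 1 := by
    rw [← eP_add]; simpa using eP_zero
  have h2 : eP p z * (starRingEnd ℂ) (eP p z) = 1 := by
    rw [Complex.mul_conj, Complex.normSq_eq_norm_sq, abs_eP]
    norm_num
  exact mul_left_cancel₀ (eP_ne_zero z) (h2.trans h1.symm)

end WeilAux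

namespace WeilAux
variable {p : ℕ} [hp : Fact p.Prime]

lemma sum_eP_univ : ∑ t : ZMod p, eP p t = 0 := by
  haveI : NeZero p := ⟨hp.out.ne_zero⟩
  have h2 : ∑ t : ZMod p, eP p t = ∑ j ∈ Finset.range p, ζp p ^ j := by
    simp_rw [eP_eq_zeta_pow]
    refine Finset.sum_nbij' (fun t : ZMod p => t.val) (fun j : ℕ => (j : ZMod p))
      ?_ ?_ ?_ ?_ ?_
    · intro t _; exact Finset.mem_range.mpr (ZMod.val_lt t)
    · intro j _; exact Finset.mem_univ _
    · intro t _; simp [ZMod.natCast_val, ZMod.cast_id]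
    · intro j hj; exact ZMod.val_cast_of_lt (Finset.mem_range.mp hj)
    · intro t _; rfl
  rw [h2]
  exact (zeta_prim (p := p)).geom_sum_eq_zero hp.out.one_lt

lemma sum_eP_mul (b : ZMod p) :
    ∑ t : ZMod p, eP p (b * t) = if b = 0 then (p : ℂ) else 0 := by
  haveI : NeZero p := ⟨hp.out.ne_zero⟩
  split_ifs with hb
  · subst hb
    simp only [zero_mul]
    rw [Finset.sum_congr rfl (fun t _ => eP_zero)]
    simp [Finset.card_univ, ZMod.card]
  · have h1 : ∑ t : ZMod p, eP p (b * t) = ∑ t : ZMod p, eP p t :=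
      Fintype.sum_equiv (Equiv.mulLeft₀ b hb) _ _ (fun t => rfl)
    rw [h1, sum_eP_univ]

end WeilAux

namespace WeilAux

variable {p : ℕ} [hp : Fact p.Prime] {r : ℕ} (a : Fin r → (ZMod p)ˣ) (nv : Fin r → ℕ)
  (G : Subgroup (ZMod p)ˣ)

noncomputable def cv {m : ℕ} (x : Fin m → G) : Fin r → ZMod p :=
  fun i => ∑ j, ((x j : (ZMod p)ˣ) : ZMod p) ^ nv i

noncomputable def σa (u : Fin r → ZMod p) : ℂ :=
  ∑ g : G, eP p (∑ i, (a i : ZMod p) * u i * ((g : (ZMod p)ˣ) : ZMod p) ^ nv i)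

lemma pow_expand (m : ℕ) (u : Fin r → ZMod p) :
    σa a nv G u ^ m = ∑ x : Fin m → G, eP p (∑ i, (a i : ZMod p) * u i * cv nv G x i) := by
  have h1 : σa a nv G u ^ m = ∏ _j : Fin m, σa a nv G u := by simp
  rw [h1, σa, Finset.prod_univ_sum, Fintype.piFinset_univ]
  refine Finset.sum_congr rfl fun x _ => ?_
  rw [← eP_sum, Finset.sum_comm]
  refine congrArg _ (Finset.sum_congr rfl fun i _ => ?_)
  simp only [cv, Finset.mul_sum]

lemma prod_ite_all {n : ℕ} (Q : Fin n → Prop) [DecidablePred Q] (z : ℂ) :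
    (∏ i, if Q i then z else 0) = if ∀ i, Q i then z ^ n else 0 := by
  by_cases h : ∀ i, Q i
  · rw [if_pos h, Finset.prod_congr rfl fun i _ => if_pos (h i)]
    simp
  · rw [if_neg h]
    obtain ⟨i, hi⟩ := not_forall.mp h
    exact Finset.prod_eq_zero (Finset.mem_univ i) (if_neg hi)

lemma Qcount (m : ℕ) :
    (Qsys p G m nv : ℝ)
      = ∑ x : Fin m → G, ∑ y : Fin m → G,
          if cv nv G x = cv nv G y then (1 : ℝ) else 0 := by
  rw [Qsys, Nat.card_eq_fintype_card, Fintype.card_subtype, Finset.card_filter]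
  push_cast
  rw [Fintype.sum_prod_type]
  refine Finset.sum_congr rfl fun x _ => Finset.sum_congr rfl fun y _ => ?_
  refine if_congr ?_ rfl rfl
  rw [funext_iff]
  simp only [cv]

lemma QcountC (m : ℕ) :
    (Qsys p G m nv : ℂ)
      = ∑ x : Fin m → G, ∑ y : Fin m → G,
          if cv nv G x = cv nv G y then (1 : ℂ) else 0 := by
  rw [Qsys, Nat.card_eq_fintype_card, Fintype.card_subtype, Finset.card_filter]
  push_cast
  rw [Fintype.sum_prod_type]
  refine Finset.sum_congr rfl fun x _ => Finset.sum_congr rfl fun y _ => ?_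
  refine if_congr ?_ rfl rfl
  rw [funext_iff]
  simp only [cv]

end WeilAux

namespace WeilAux

variable {p : ℕ} [hp : Fact p.Prime] {r : ℕ} (a : Fin r → (ZMod p)ˣ) (nv : Fin r → ℕ)
  (G : Subgroup (ZMod p)ˣ)

lemma fiber_sum (m : ℕ) (F : (Fin r → ZMod p) → ℝ) :
    ∑ x : Fin m → G, F (cv nv G x)
      = ∑ u : Fin r → ZMod p,
          ((Finset.univ.filter fun x : Fin m → G => cv nv G x = u).card : ℝ) * F u := by
  have h : ∀ u : Fin r → ZMod p,
      ((Finset.univ.filter fun x : Fin m → G => cv nv G x = u).card : ℝ) * F u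
        = ∑ x : Fin m → G, if cv nv G x = u then F u else 0 := by
    intro u
    rw [Finset.sum_ite, Finset.sum_const, Finset.sum_const_zero, add_zero, nsmul_eq_mul]
  rw [Finset.sum_congr rfl fun u _ => h u, Finset.sum_comm]
  refine Finset.sum_congr rfl fun x _ => ?_
  rw [Finset.sum_ite_eq]
  simp

lemma sum_sq_filter (m : ℕ) :
    ∑ u : Fin r → ZMod p,
        ((Finset.univ.filter fun x : Fin m → G => cv nv G x = u).card : ℝ) ^ 2
      = (Qsys p G m nv : ℝ) := by
  rw [Qcount]
  have hcard : ∀ u : Fin r → ZMod p,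
      ((Finset.univ.filter fun x : Fin m → G => cv nv G x = u).card : ℝ)
        = ∑ x : Fin m → G, if cv nv G x = u then (1 : ℝ) else 0 := by
    intro u
    rw [Finset.card_filter]
    push_cast
    rfl
  have key : ∀ x y : Fin m → G,
      (∑ u : Fin r → ZMod p,
        (if cv nv G x = u then (1 : ℝ) else 0) * (if cv nv G y = u then (1:ℝ) else 0))
      = if cv nv G x = cv nv G y then (1 : ℝ) else 0 := by
    intro x y
    simp_rw [ite_mul, one_mul, zero_mul]
    rw [Finset.sum_ite_eq]
    simp only [Finset.mem_univ, if_true]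
    exact if_congr eq_comm rfl rfl
  calc ∑ u : Fin r → ZMod p,
        ((Finset.univ.filter fun x : Fin m → G => cv nv G x = u).card : ℝ) ^ 2
      = ∑ u : Fin r → ZMod p, ∑ x : Fin m → G, ∑ y : Fin m → G,
          (if cv nv G x = u then (1:ℝ) else 0) * (if cv nv G y = u then (1:ℝ) else 0) := by
        refine Finset.sum_congr rfl fun u _ => ?_
        rw [hcard, sq, Finset.sum_mul_sum]
    _ = ∑ x : Fin m → G, ∑ y : Fin m → G, ∑ u : Fin r → ZMod p,
          (if cv nv G x = u then (1:ℝ) else 0) * (if cv nv G y = u then (1:ℝ) else 0) := by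
        rw [Finset.sum_comm]
        exact Finset.sum_congr rfl fun x _ => Finset.sum_comm
    _ = _ := Finset.sum_congr rfl fun x _ => Finset.sum_congr rfl fun y _ => key x y

end WeilAux

namespace WeilAux

variable {p : ℕ} [hp : Fact p.Prime] {r : ℕ} (a : Fin r → (ZMod p)ˣ) (nv : Fin r → ℕ)
  (G : Subgroup (ZMod p)ˣ)

lemma cv_mul {m : ℕ} (x : Fin m → G) (g : G) (i : Fin r) :
    cv nv G (fun j => x j * g) i = cv nv G x i * ((g : (ZMod p)ˣ) : ZMod p) ^ nv i := by
  simp only [cv, Finset.sum_mul]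
  refine Finset.sum_congr rfl fun j _ => ?_
  rw [← mul_pow]
  norm_cast

lemma step1 (k : ℕ) :
    (Nat.card G : ℂ) * σa a nv G (fun _ => 1) ^ k
      = ∑ x : Fin k → G, σa a nv G (cv nv G x) := by
  have hg : ∀ g : G,
      (∑ x : Fin k → G,
        eP p (∑ i, (a i : ZMod p) * cv nv G x i * ((g : (ZMod p)ˣ) : ZMod p) ^ nv i))
        = σa a nv G (fun _ => 1) ^ k := by
    intro g
    rw [pow_expand]
    calc (∑ x : Fin k → G,
          eP p (∑ i, (a i : ZMod p) * cv nv G x i * ((g : (ZMod p)ˣ) : ZMod p) ^ nv i))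
        = ∑ x : Fin k → G,
            eP p (∑ i, (a i : ZMod p) * (fun _ => (1 : ZMod p)) i
              * cv nv G ((Equiv.piCongrRight fun _ : Fin k => Equiv.mulRight g) x) i) := by
          refine Finset.sum_congr rfl fun x _ => ?_
          refine congrArg _ (Finset.sum_congr rfl fun i _ => ?_)
          have : cv nv G ((Equiv.piCongrRight fun _ : Fin k => Equiv.mulRight g) x) i
              = cv nv G x i * ((g : (ZMod p)ˣ) : ZMod p) ^ nv i := cv_mul nv G x g i
          rw [this]
          ring
      _ = ∑ y : Fin k → G,
            eP p (∑ i, (a i : ZMod p) * (fun _ => (1 : ZMod p)) i * cv nv G y i) :=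
          Equiv.sum_comp (Equiv.piCongrRight fun _ : Fin k => Equiv.mulRight g)
            (fun y : Fin k → G =>
              eP p (∑ i, (a i : ZMod p) * (fun _ => (1 : ZMod p)) i * cv nv G y i))
  calc (Nat.card G : ℂ) * σa a nv G (fun _ => 1) ^ k
      = ∑ _g : G, σa a nv G (fun _ => 1) ^ k := by
        rw [Finset.sum_const, Finset.card_univ, nsmul_eq_mul, Nat.card_eq_fintype_card]
    _ = ∑ g : G, ∑ x : Fin k → G,
          eP p (∑ i, (a i : ZMod p) * cv nv G x i * ((g : (ZMod p)ˣ) : ZMod p) ^ nv i) :=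
        Finset.sum_congr rfl fun g _ => (hg g).symm
    _ = ∑ x : Fin k → G, ∑ g : G,
          eP p (∑ i, (a i : ZMod p) * cv nv G x i * ((g : (ZMod p)ˣ) : ZMod p) ^ nv i) :=
        Finset.sum_comm
    _ = ∑ x : Fin k → G, σa a nv G (cv nv G x) := rfl

end WeilAux

namespace WeilAux

variable {p : ℕ} [hp : Fact p.Prime] {r : ℕ} (a : Fin r → (ZMod p)ˣ) (nv : Fin r → ℕ)
  (G : Subgroup (ZMod p)ˣ)

lemma orth (m : ℕ) :
    ∑ u : Fin r → ZMod p, ‖σa a nv G u‖ ^ (2 * m)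
      = (p : ℝ) ^ r * (Qsys p G m nv : ℝ) := by
  have key : ∀ x y : Fin m → G,
      (∑ u : Fin r → ZMod p,
        eP p ((∑ i, (a i : ZMod p) * u i * cv nv G x i)
          - ∑ i, (a i : ZMod p) * u i * cv nv G y i))
      = if cv nv G x = cv nv G y then ((p : ℂ)) ^ r else 0 := by
    intro x y
    have hdiff : ∀ u : Fin r → ZMod p,
        ((∑ i, (a i : ZMod p) * u i * cv nv G x i)
          - ∑ i, (a i : ZMod p) * u i * cv nv G y i)
        = ∑ i, ((a i : ZMod p) * (cv nv G x i - cv nv G y i)) * u i := by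
      intro u
      rw [← Finset.sum_sub_distrib]
      exact Finset.sum_congr rfl fun i _ => by ring
    calc (∑ u : Fin r → ZMod p,
          eP p ((∑ i, (a i : ZMod p) * u i * cv nv G x i)
            - ∑ i, (a i : ZMod p) * u i * cv nv G y i))
        = ∑ u : Fin r → ZMod p,
            ∏ i, eP p (((a i : ZMod p) * (cv nv G x i - cv nv G y i)) * u i) := by
          refine Finset.sum_congr rfl fun u _ => ?_
          rw [hdiff u, eP_sum]
      _ = ∏ i, ∑ t : ZMod p, eP p (((a i : ZMod p) * (cv nv G x i - cv nv G y i)) * t) := by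
          rw [Finset.prod_univ_sum, Fintype.piFinset_univ]
      _ = ∏ i, if cv nv G x i = cv nv G y i then (p : ℂ) else 0 := by
          refine Finset.prod_congr rfl fun i _ => ?_
          rw [sum_eP_mul]
          exact if_congr (by rw [Units.mul_right_eq_zero, sub_eq_zero]) rfl rfl
      _ = if ∀ i, cv nv G x i = cv nv G y i then (p : ℂ) ^ r else 0 := prod_ite_all _ _
      _ = _ := if_congr (funext_iff).symm rfl rfl
  have hC : ((∑ u : Fin r → ZMod p, ‖σa a nv G u‖ ^ (2 * m) : ℝ) : ℂ)
      = (p : ℂ) ^ r * ((Qsys p G m nv : ℝ) : ℂ) := by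
    push_cast
    calc ∑ u : Fin r → ZMod p, (‖σa a nv G u‖ : ℂ) ^ (2 * m)
        = ∑ u : Fin r → ZMod p, σa a nv G u ^ m * (starRingEnd ℂ) (σa a nv G u ^ m) := by
          refine Finset.sum_congr rfl fun u _ => ?_
          rw [Complex.mul_conj, Complex.normSq_eq_norm_sq, norm_pow]
          push_cast
          rw [← pow_mul, mul_comm m 2]
      _ = ∑ u : Fin r → ZMod p, ∑ x : Fin m → G, ∑ y : Fin m → G,
            eP p ((∑ i, (a i : ZMod p) * u i * cv nv G x i)
              - ∑ i, (a i : ZMod p) * u i * cv nv G y i) := by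
          refine Finset.sum_congr rfl fun u _ => ?_
          rw [pow_expand, map_sum, Finset.sum_mul_sum]
          refine Finset.sum_congr rfl fun x _ => Finset.sum_congr rfl fun y _ => ?_
          rw [conj_eP, ← eP_add, sub_eq_add_neg]
      _ = ∑ x : Fin m → G, ∑ y : Fin m → G, ∑ u : Fin r → ZMod p,
            eP p ((∑ i, (a i : ZMod p) * u i * cv nv G x i)
              - ∑ i, (a i : ZMod p) * u i * cv nv G y i) := by
          rw [Finset.sum_comm]
          exact Finset.sum_congr rfl fun x _ => Finset.sum_comm
      _ = ∑ x : Fin m → G, ∑ y : Fin m → G,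
            (if cv nv G x = cv nv G y then ((p : ℂ)) ^ r else 0) :=
          Finset.sum_congr rfl fun x _ => Finset.sum_congr rfl fun y _ => key x y
      _ = (p : ℂ) ^ r * ∑ x : Fin m → G, ∑ y : Fin m → G,
            (if cv nv G x = cv nv G y then (1 : ℂ) else 0) := by
          rw [Finset.mul_sum]
          refine Finset.sum_congr rfl fun x _ => ?_
          rw [Finset.mul_sum]
          refine Finset.sum_congr rfl fun y _ => ?_
          rw [mul_ite, mul_one, mul_zero]
      _ = (p : ℂ) ^ r * ((Qsys p G m nv : ℝ) : ℂ) := by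
          congr 1
          rw [show ((Qsys p G m nv : ℝ) : ℂ) = (Qsys p G m nv : ℂ) by push_cast; rfl]
          exact (QcountC nv G m).symm
  exact_mod_cast hC

end WeilAux


/-- For `f(X) = a_r X^{n_r} + ⋯ + a_1 X^{n_1}` with nonzero coefficients and exponents
`n_r > ⋯ > n_1 ≥ 1`, a subgroup `G ⊆ F_p^*` of order `τ` and positive integers `k, ℓ`:
`|S(G;f)|^{2kℓ} ≤ p^r τ^{2kℓ−2k−2ℓ} Q_k(n⃗;G) Q_ℓ(n⃗;G)`. -/
theorem weil_sum_pow_le_moments (p : ℕ) [Fact p.Prime] (r : ℕ) (hr : 1 ≤ r)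
    (a : Fin r → (ZMod p)ˣ) (nv : Fin r → ℕ) (hmono : StrictMono nv) (h1 : ∀ i, 1 ≤ nv i)
    (G : Subgroup (ZMod p)ˣ) (k ℓ : ℕ) (hk : 0 < k) (hℓ : 0 < ℓ) :
    ‖∑ g : G,
        eP p (∑ i, (a i : ZMod p) * ((g : (ZMod p)ˣ) : ZMod p) ^ nv i)‖ ^ (2 * k * ℓ)
      ≤ (p : ℝ) ^ r * (Nat.card G : ℝ) ^ (2 * (k : ℤ) * ℓ - 2 * k - 2 * ℓ)
        * (Qsys p G k nv : ℝ) * (Qsys p G ℓ nv : ℝ) := by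
  classical
  have hτposn : 0 < Nat.card G := Nat.card_pos
  have hτpos : (0 : ℝ) < (Nat.card G : ℝ) := by exact_mod_cast hτposn
  have hτne : (Nat.card G : ℝ) ≠ 0 := ne_of_gt hτpos
  set τ := Nat.card G with hτdef
  set S := ∑ g : G, eP p (∑ i, (a i : ZMod p) * ((g : (ZMod p)ˣ) : ZMod p) ^ nv i) with hSdef
  have hS1 : WeilAux.σa a nv G (fun _ => 1) = S := by
    rw [WeilAux.σa, hSdef]
    refine Finset.sum_congr rfl fun g _ => ?_
    exact congrArg _ (Finset.sum_congr rfl fun i _ => by rw [mul_one])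
  set A := ∑ x : Fin k → G, ‖WeilAux.σa a nv G (WeilAux.cv nv G x)‖ with hAdef
  set B := ∑ x : Fin k → G, ‖WeilAux.σa a nv G (WeilAux.cv nv G x)‖ ^ ℓ with hBdef
  have hAnn : 0 ≤ A := Finset.sum_nonneg fun x _ => norm_nonneg _
  have hBnn : 0 ≤ B := Finset.sum_nonneg fun x _ => pow_nonneg (norm_nonneg _) _
  -- Step 1
  have h1 : (τ : ℝ) * ‖S‖ ^ k ≤ A := by
    have hstep := WeilAux.step1 a nv G k
    rw [hS1] at hstep
    calc (τ : ℝ) * ‖S‖ ^ k = ‖(τ : ℂ) * S ^ k‖ := by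
          rw [norm_mul, norm_pow, Complex.norm_natCast]
      _ = ‖∑ x : Fin k → G, WeilAux.σa a nv G (WeilAux.cv nv G x)‖ := by
          rw [hstep]
      _ ≤ A := norm_sum_le _ _
  -- Step 2 (Hölder / power mean)
  have hcard : ((Finset.univ : Finset (Fin k → G)).card : ℝ) = (τ : ℝ) ^ k := by
    rw [Finset.card_univ]
    rw [show Fintype.card (Fin k → G) = Fintype.card G ^ Fintype.card (Fin k) from
      Fintype.card_fun]
    rw [Fintype.card_fin, hτdef, Nat.card_eq_fintype_card]
    push_cast
    rfl
  have h2 : A ^ ℓ ≤ ((τ : ℝ) ^ k) ^ (ℓ - 1) * B := by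
    have h := pow_sum_div_card_le_sum_pow (s := (Finset.univ : Finset (Fin k → G)))
      (f := fun x => ‖WeilAux.σa a nv G (WeilAux.cv nv G x)‖)
      (fun i _ => norm_nonneg _) (ℓ - 1)
    rw [Nat.sub_add_cancel hℓ, hcard] at h
    rw [div_le_iff₀ (by positivity)] at h
    calc A ^ ℓ ≤ B * ((τ:ℝ)^k) ^ (ℓ-1) := h
      _ = ((τ : ℝ) ^ k) ^ (ℓ - 1) * B := by ring
  -- Step 3 (Cauchy-Schwarz + orthogonality)
  have h3 : B ^ 2 ≤ (Qsys p G k nv : ℝ) * ((p : ℝ) ^ r * (Qsys p G ℓ nv : ℝ)) := by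
    rw [hBdef, WeilAux.fiber_sum nv G k (fun u => ‖WeilAux.σa a nv G u‖ ^ ℓ)]
    calc (∑ u : Fin r → ZMod p,
            ((Finset.univ.filter fun x : Fin k → G => WeilAux.cv nv G x = u).card : ℝ)
              * ‖WeilAux.σa a nv G u‖ ^ ℓ) ^ 2
        ≤ (∑ u : Fin r → ZMod p,
            ((Finset.univ.filter fun x : Fin k → G => WeilAux.cv nv G x = u).card : ℝ) ^ 2)
          * ∑ u : Fin r → ZMod p, (‖WeilAux.σa a nv G u‖ ^ ℓ) ^ 2 :=
          Finset.sum_mul_sq_le_sq_mul_sq _ _ _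
      _ = (Qsys p G k nv : ℝ) * ((p : ℝ) ^ r * (Qsys p G ℓ nv : ℝ)) := by
          rw [WeilAux.sum_sq_filter]
          congr 1
          rw [← WeilAux.orth a nv G ℓ]
          exact Finset.sum_congr rfl fun u _ => by rw [← pow_mul, mul_comm ℓ 2]
  -- Combine
  have key : ((τ : ℝ) * ‖S‖ ^ k) ^ (2 * ℓ)
      ≤ ((τ : ℝ) ^ k) ^ (2 * (ℓ - 1))
        * ((Qsys p G k nv : ℝ) * ((p : ℝ) ^ r * (Qsys p G ℓ nv : ℝ))) := by
    calc ((τ : ℝ) * ‖S‖ ^ k) ^ (2 * ℓ) ≤ A ^ (2 * ℓ) :=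
          pow_le_pow_left₀ (by positivity) h1 _
      _ = (A ^ ℓ) ^ 2 := by rw [← pow_mul, mul_comm 2 ℓ]
      _ ≤ (((τ : ℝ) ^ k) ^ (ℓ - 1) * B) ^ 2 := pow_le_pow_left₀ (by positivity) h2 2
      _ = ((τ : ℝ) ^ k) ^ (2 * (ℓ - 1)) * B ^ 2 := by
          rw [mul_pow, ← pow_mul, mul_comm (ℓ-1) 2]
      _ ≤ _ := mul_le_mul_of_nonneg_left h3 (by positivity)
  have hexp : ((τ : ℝ) ^ k) ^ (2 * (ℓ - 1)) = (τ : ℝ) ^ (2 * k * ℓ - 2 * k) := by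
    rw [← pow_mul]
    congr 1
    obtain ⟨ℓ', rfl⟩ : ∃ ℓ', ℓ = ℓ' + 1 := ⟨ℓ - 1, (Nat.succ_pred_eq_of_pos hℓ).symm⟩
    simp only [Nat.add_sub_cancel]
    symm
    apply Nat.sub_eq_of_eq_add
    ring
  have h2k_le : 2 * k ≤ 2 * k * ℓ := Nat.le_mul_of_pos_right _ hℓ
  have hz : (τ : ℝ) ^ (2 * (k : ℤ) * ℓ - 2 * k - 2 * ℓ)
      = (τ : ℝ) ^ (2 * k * ℓ - 2 * k) / (τ : ℝ) ^ (2 * ℓ) := by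
    rw [eq_div_iff (by positivity), ← zpow_natCast (τ : ℝ) (2 * k * ℓ - 2 * k),
      ← zpow_natCast (τ : ℝ) (2 * ℓ), ← zpow_add₀ hτne]
    congr 1
    rw [Nat.cast_sub h2k_le]
    push_cast
    ring
  rw [hz, show (p : ℝ) ^ r * ((τ : ℝ) ^ (2 * k * ℓ - 2 * k) / (τ : ℝ) ^ (2 * ℓ))
      * (Qsys p G k nv : ℝ) * (Qsys p G ℓ nv : ℝ)
      = ((τ : ℝ) ^ (2 * k * ℓ - 2 * k)
          * ((Qsys p G k nv : ℝ) * ((p : ℝ) ^ r * (Qsys p G ℓ nv : ℝ))))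
        / (τ : ℝ) ^ (2 * ℓ) by ring, le_div_iff₀ (by positivity)]
  have hLHS : ((τ : ℝ) * ‖S‖ ^ k) ^ (2 * ℓ)
      = ‖S‖ ^ (2 * k * ℓ) * (τ : ℝ) ^ (2 * ℓ) := by
    rw [mul_pow, ← pow_mul, show k * (2 * ℓ) = 2 * k * ℓ by ring]
    ring
  rw [← hLHS, ← hexp]
  exact key
end

section
/- Let p be a prime, let n > m > 0 be integers with d = gcd(m,n), and set e = gcd(d, p−1). Then for every positive integer s, T_3(m,n;s) ≤ e^6 · T_3(m/d, n/d; s). -/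
/-- `T_3(m,n;s)`: the number of 6-tuples `(x_1,…,x_6) ∈ (F_p^*)^6` with
`x_1^{sm} + x_2^{sm} + x_3^{sm} = x_4^{sm} + x_5^{sm} + x_6^{sm}` and
`x_1^{sn} + x_2^{sn} + x_3^{sn} = x_4^{sn} + x_5^{sn} + x_6^{sn}`. -/
noncomputable def T3 (p m n s : ℕ) : ℕ :=
  Nat.card {x : (Fin 3 → (ZMod p)ˣ) × (Fin 3 → (ZMod p)ˣ) //
    (∑ j, ((x.1 j : ZMod p)) ^ (s * m) = ∑ j, ((x.2 j : ZMod p)) ^ (s * m)) ∧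
    (∑ j, ((x.1 j : ZMod p)) ^ (s * n) = ∑ j, ((x.2 j : ZMod p)) ^ (s * n))}

/-- With `d = gcd(m,n)` and `e = gcd(d, p−1)`, one has
`T_3(m,n;s) ≤ e^6 T_3(m/d, n/d; s)`. -/
theorem T3_reduce_gcd (p : ℕ) (hp : p.Prime) (m n : ℕ) (hm : 0 < m) (hmn : m < n)
    (d e : ℕ) (hd : d = Nat.gcd m n) (he : e = Nat.gcd d (p - 1)) (s : ℕ) (hs : 0 < s) :
    T3 p m n s ≤ e ^ 6 * T3 p (m / d) (n / d) s := by
  classical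
  haveI : Fact p.Prime := ⟨hp⟩
  have hd0 : 0 < d := hd ▸ Nat.gcd_pos_of_pos_left _ hm
  have hdm : d ∣ m := hd ▸ Nat.gcd_dvd_left m n
  have hdn : d ∣ n := hd ▸ Nat.gcd_dvd_right m n
  have he0 : 0 < e := he ▸ Nat.gcd_pos_of_pos_left _ hd0
  set U := (ZMod p)ˣ
  -- card of d-th roots of unity is at most e
  have hK : Fintype.card {u : U // u ^ d = 1} ≤ e := by
    rw [Fintype.card_subtype]
    calc (Finset.univ.filter (fun u : U => u ^ d = 1)).card
        ≤ (Finset.univ.filter (fun u : U => u ^ e = 1)).card := by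
          apply Finset.card_le_card
          intro u hu
          simp only [Finset.mem_filter, Finset.mem_univ, true_and] at hu ⊢
          have h1 : orderOf u ∣ d := orderOf_dvd_of_pow_eq_one hu
          have h2 : orderOf u ∣ p - 1 := by
            have h3 : orderOf u ∣ Fintype.card U := orderOf_dvd_card
            rwa [ZMod.card_units p] at h3
          have := Nat.dvd_gcd h1 h2
          rw [← he] at this
          exact orderOf_dvd_iff_pow_eq_one.mp this
      _ ≤ e := IsCyclic.card_pow_eq_one_le he0
  -- key exponent identity
  have key : ∀ (u : U) (k : ℕ), d ∣ k →
      ((u ^ d : U) : ZMod p) ^ (s * (k / d)) = (u : ZMod p) ^ (s * k) := by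
    intro u k hk
    rw [Units.val_pow_eq_pow_val, ← pow_mul]
    congr 1
    calc d * (s * (k / d)) = s * (d * (k / d)) := by ring
      _ = s * k := by rw [Nat.mul_div_cancel' hk]
  set α := (Fin 3 → U) × (Fin 3 → U)
  set P : α → Prop := fun x =>
    (∑ j, ((x.1 j : ZMod p)) ^ (s * m) = ∑ j, ((x.2 j : ZMod p)) ^ (s * m)) ∧
    (∑ j, ((x.1 j : ZMod p)) ^ (s * n) = ∑ j, ((x.2 j : ZMod p)) ^ (s * n)) with hP
  set P' : α → Prop := fun x =>
    (∑ j, ((x.1 j : ZMod p)) ^ (s * (m / d)) = ∑ j, ((x.2 j : ZMod p)) ^ (s * (m / d))) ∧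
    (∑ j, ((x.1 j : ZMod p)) ^ (s * (n / d)) = ∑ j, ((x.2 j : ZMod p)) ^ (s * (n / d))) with hP'
  have hT1 : T3 p m n s = (Finset.univ.filter P).card := by
    rw [T3, Nat.card_eq_fintype_card, Fintype.card_subtype]
  have hT2 : T3 p (m / d) (n / d) s = (Finset.univ.filter P').card := by
    rw [T3, Nat.card_eq_fintype_card, Fintype.card_subtype]
  rw [hT1, hT2]
  set f : α → α := fun x => (fun j => x.1 j ^ d, fun j => x.2 j ^ d) with hf
  apply Finset.card_le_mul_card_image_of_maps_to (f := f)
  · -- the d-th power map sends solutions for (m, n) to solutions for (m/d, n/d)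
    intro x hx
    simp only [Finset.mem_filter, Finset.mem_univ, true_and, hP, hP'] at hx ⊢
    constructor
    · simpa only [hf, key _ m hdm] using hx.1
    · simpa only [hf, key _ n hdn] using hx.2
  · -- each fiber has at most e^6 elements
    intro b hb
    calc ((Finset.univ.filter P).filter (fun x => f x = b)).card
        ≤ (Finset.univ.filter (fun x => f x = b)).card := by
          apply Finset.card_le_card
          intro x hx
          simp only [Finset.mem_filter, Finset.mem_univ, true_and] at hx ⊢
          exact hx.2
      _ ≤ e ^ 6 := by
          rcases (Finset.univ.filter (fun x : α => f x = b)).eq_empty_or_nonempty with hemp | ⟨x₀, hx₀⟩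
          · rw [hemp]; positivity
          · simp only [Finset.mem_filter, Finset.mem_univ, true_and] at hx₀
            rw [show (Finset.univ.filter (fun x : α => f x = b)).card
                = Fintype.card {x : α // f x = b} from (Fintype.card_subtype _).symm]
            have hinj : Function.Injective (fun x : {x : α // f x = b} =>
                ((fun j => (⟨x.1.1 j * (x₀.1 j)⁻¹, by
                    have h1 : x.1.1 j ^ d = b.1 j := congrFun (congrArg Prod.fst x.2) j
                    have h2 : x₀.1 j ^ d = b.1 j := congrFun (congrArg Prod.fst hx₀) j
                    rw [mul_pow, inv_pow, h1, h2, mul_inv_cancel]⟩ : {u : U // u ^ d = 1}),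
                  fun j => (⟨x.1.2 j * (x₀.2 j)⁻¹, by
                    have h1 : x.1.2 j ^ d = b.2 j := congrFun (congrArg Prod.snd x.2) j
                    have h2 : x₀.2 j ^ d = b.2 j := congrFun (congrArg Prod.snd hx₀) j
                    rw [mul_pow, inv_pow, h1, h2, mul_inv_cancel]⟩ : {u : U // u ^ d = 1})) :
                  (Fin 3 → {u : U // u ^ d = 1}) × (Fin 3 → {u : U // u ^ d = 1}))) := by
              intro x y hxy
              obtain ⟨h1, h2⟩ := Prod.mk.injEq _ _ _ _ ▸ hxy
              apply Subtype.ext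
              apply Prod.ext
              · funext j
                have := congrFun h1 j
                simpa [mul_left_inj] using congrArg Subtype.val this
              · funext j
                have := congrFun h2 j
                simpa [mul_left_inj] using congrArg Subtype.val this
            calc Fintype.card {x : α // f x = b}
                ≤ Fintype.card ((Fin 3 → {u : U // u ^ d = 1}) × (Fin 3 → {u : U // u ^ d = 1})) :=
                  Fintype.card_le_of_injective _ hinj
              _ = Fintype.card {u : U // u ^ d = 1} ^ 3 * Fintype.card {u : U // u ^ d = 1} ^ 3 := by
                  simp [Fintype.card_fun]
              _ ≤ e ^ 3 * e ^ 3 :=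
                  Nat.mul_le_mul (Nat.pow_le_pow_left hK 3) (Nat.pow_le_pow_left hK 3)
              _ = e ^ 6 := by ring
end

section
/- There exists an absolute constant c > 0 such that for every real ε with 0 < ε < 1/2 and every integer n ≥ 2, η_n(ε) ≥ c · (7ε/9)^{n−1} / (n−2)!. -/
/-- The sequence `η_n(ε)`: `η_1(ε) = η_2(ε) = 7ε/27`, and for `n ≥ 3`,
`η_n(ε) = 7ε / (18 κ_n(ε))` where `κ_n(ε) = ⌈(n−2−7ε/3)/(2η_{n−1}(ε)) + 3⌉`. -/
noncomputable def etaSeq : ℕ → ℝ → ℝ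
  | 0, _ => 0
  | 1, ε => 7 * ε / 27
  | 2, ε => 7 * ε / 27
  | n + 3, ε =>
      7 * ε / (18 * (⌈(((n : ℝ) + 3) - 2 - 7 * ε / 3) / (2 * etaSeq (n + 2) ε) + 3⌉ : ℝ))

noncomputable def kap (n : ℕ) (ε : ℝ) : ℤ :=
  ⌈(((n : ℝ) + 3) - 2 - 7 * ε / 3) / (2 * etaSeq (n + 2) ε) + 3⌉

lemma etaSeq_eq_kap (n : ℕ) (ε : ℝ) :
    etaSeq (n + 3) ε = 7 * ε / (18 * ((kap n ε : ℤ) : ℝ)) := rfl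

/-- kap lower bound for j = 0 : `3 ≤ kap 0 ε`. -/
lemma kap_zero_ge {ε : ℝ} (hε0 : 0 < ε) (hε : ε < 1/2) : (3 : ℤ) ≤ kap 0 ε := by
  have h2 : etaSeq 2 ε = 7 * ε / 27 := rfl
  have hden : (0:ℝ) < 2 * etaSeq 2 ε := by rw [h2]; positivity
  have hx : (-1 : ℝ) < (((0 : ℕ) : ℝ) + 3 - 2 - 7 * ε / 3) / (2 * etaSeq 2 ε) := by
    rw [lt_div_iff₀ hden, h2]
    push_cast
    nlinarith
  have : (2 : ℤ) < kap 0 ε := by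
    rw [kap, Int.lt_ceil]
    push_cast
    push_cast at hx
    linarith
  omega

lemma etaSeq_pos_ub {ε : ℝ} (hε0 : 0 < ε) (hε : ε < 1/2) (n : ℕ) :
    0 < etaSeq (n+1) ε ∧ etaSeq (n+1) ε ≤ 28 * ε / (27 * 2^(n+1)) := by
  induction n with
  | zero =>
      refine ⟨by show (0:ℝ) < 7 * ε / 27; positivity, ?_⟩
      show (7:ℝ) * ε / 27 ≤ 28 * ε / (27 * 2 ^ (0+1))
      rw [div_le_div_iff₀ (by norm_num) (by norm_num)]
      norm_num
      nlinarith
  | succ k ih =>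
      cases k with
      | zero =>
          refine ⟨by show (0:ℝ) < 7 * ε / 27; positivity, ?_⟩
          show (7:ℝ) * ε / 27 ≤ 28 * ε / (27 * 2 ^ (1+1))
          rw [div_le_div_iff₀ (by norm_num) (by norm_num)]
          norm_num
          nlinarith
      | succ j =>
          obtain ⟨hpos, hub⟩ := ih
          -- goal about etaSeq (j+3)
          have hK : (3:ℝ) * 2 ^ j ≤ ((kap j ε : ℤ) : ℝ) := by
            rcases Nat.eq_zero_or_pos j with rfl | hj
            · have := kap_zero_ge hε0 hε
              push_cast
              simpa using (by exact_mod_cast this : (3:ℝ) ≤ ((kap 0 ε : ℤ) : ℝ))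
            · -- j ≥ 1
              have h2h : (0:ℝ) < 2 * etaSeq (j+2) ε := by linarith
              have hnum : 14 * ε / 9 ≤ ((j : ℝ) + 3) - 2 - 7 * ε / 3 := by
                have : (1:ℝ) ≤ (j:ℝ) := by exact_mod_cast hj
                nlinarith
              have hx : (3:ℝ) * 2 ^ j ≤ (((j : ℝ) + 3) - 2 - 7 * ε / 3) / (2 * etaSeq (j+2) ε) := by
                rw [le_div_iff₀ h2h]
                have hp : (0:ℝ) < (2:ℝ)^j := by positivity
                have h2 : (2:ℝ)^(j+2) = 4 * 2^j := by ring
                -- 2h ≤ 56 ε / (27 * 4 * 2^j) = 14 ε/(27 * 2^j)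
                have hub' : etaSeq (j+2) ε * (27 * 2^j) ≤ 7 * ε := by
                  have := mul_le_mul_of_nonneg_right hub (le_of_lt (by positivity : (0:ℝ) < 27 * 2^j))
                  calc etaSeq (j+2) ε * (27 * 2^j) ≤ 28 * ε / (27 * 2^(j+2)) * (27 * 2^j) := this
                    _ = 7 * ε := by rw [h2]; field_simp; ring
                -- goal : 3*2^j * (2 * etaSeq (j+2) ε) ≤ num
                nlinarith [hub', hnum, hε0, hp]
              calc (3:ℝ) * 2^j ≤ _ := hx
                _ ≤ _ + 3 := by linarith
                _ ≤ ((kap j ε : ℤ) : ℝ) := Int.le_ceil _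
          have hp : (0:ℝ) < (2:ℝ)^j := by positivity
          have hKpos : (0:ℝ) < ((kap j ε : ℤ) : ℝ) := by nlinarith
          constructor
          · rw [etaSeq_eq_kap]; positivity
          · rw [etaSeq_eq_kap, div_le_div_iff₀ (by positivity) (by positivity)]
            have h3 : (2:ℝ)^(j+1+1+1) = 8 * 2^j := by ring
            rw [h3]
            nlinarith [mul_le_mul_of_nonneg_left hK (le_of_lt hε0)]

set_option maxHeartbeats 1000000 in
lemma etaSeq_claim {ε : ℝ} (hε0 : 0 < ε) (hε : ε < 1/2) (n : ℕ) :
    1/100 * (7*ε/9)^(n+2) / (Nat.factorial (n+1) : ℝ) * (1 + 2/2^n) ≤ etaSeq (n+3) ε := by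
  induction n with
  | zero =>
      -- η₃ = 7ε/(18 K), K = kap 0 ε
      have h2 : etaSeq 2 ε = 7 * ε / 27 := rfl
      have hden : (0:ℝ) < 2 * etaSeq 2 ε := by rw [h2]; positivity
      have hKge : (3:ℝ) ≤ ((kap 0 ε : ℤ) : ℝ) := by exact_mod_cast kap_zero_ge hε0 hε
      -- upper bound : K * ε ≤ 27/14 + 2
      have hKub : ((kap 0 ε : ℤ) : ℝ) * ε ≤ 27/14 + 2 := by
        have hceil : ((kap 0 ε : ℤ) : ℝ) <
            (((0 : ℕ) : ℝ) + 3 - 2 - 7 * ε / 3) / (2 * etaSeq 2 ε) + 3 + 1 := by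
          exact Int.ceil_lt_add_one _
        have hxε : (((0 : ℕ) : ℝ) + 3 - 2 - 7 * ε / 3) / (2 * etaSeq 2 ε) * ε ≤ 27/14 := by
          rw [h2]
          rw [div_mul_eq_mul_div, div_le_iff₀ (by positivity)]
          push_cast
          nlinarith
        nlinarith [mul_lt_mul_of_pos_right hceil hε0, hxε]
      rw [etaSeq_eq_kap, le_div_iff₀ (by positivity)]
      norm_num [Nat.factorial]
      nlinarith [hKub, mul_le_mul_of_nonneg_left hKub (le_of_lt hε0), sq_nonneg ε, hε0]
  | succ n ih =>
      obtain ⟨hpos, hub⟩ := etaSeq_pos_ub hε0 hε (n+2)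
      -- hpos hub about etaSeq (n+3)
      set h : ℝ := etaSeq (n+3) ε with hh
      set K : ℝ := ((kap (n+1) ε : ℤ) : ℝ) with hKdef
      have hkap2 : etaSeq (n+1+2) ε = h := rfl
      have hnum_pos : (0:ℝ) < (((n+1 : ℕ) : ℝ) + 3) - 2 - 7 * ε / 3 := by
        push_cast; nlinarith [Nat.cast_nonneg (α := ℝ) n]
      have h2h : (0:ℝ) < 2 * h := by linarith
      -- K ≥ 3
      have hKge : (3:ℝ) ≤ K := by
        have hx : (0:ℝ) ≤ ((((n+1 : ℕ) : ℝ) + 3) - 2 - 7 * ε / 3) / (2 * etaSeq (n+1+2) ε) := by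
          rw [hkap2]
          positivity
        calc (3:ℝ) ≤ _ + 3 := by linarith
          _ ≤ K := Int.le_ceil _
      -- K * (2h) ≤ (n+2) + 8h
      have hK2h : K * (2*h) ≤ ((n:ℝ) + 2) + 8 * h := by
        have hceil : K < ((((n+1 : ℕ) : ℝ) + 3) - 2 - 7 * ε / 3) / (2 * etaSeq (n+1+2) ε) + 3 + 1 :=
          Int.ceil_lt_add_one _
        rw [hkap2] at hceil
        have hxm : ((((n+1 : ℕ) : ℝ) + 3) - 2 - 7 * ε / 3) / (2 * h) * (2*h)
            = (((n+1 : ℕ) : ℝ) + 3) - 2 - 7 * ε / 3 := div_mul_cancel₀ _ (ne_of_gt h2h)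
        have := mul_lt_mul_of_pos_right hceil h2h
        rw [mul_comm] at hxm
        push_cast at this hxm ⊢
        nlinarith
      -- 72 h * 2^n ≤ 5
      have hp : (0:ℝ) < (2:ℝ)^n := by positivity
      have h72 : 72 * h * 2^n ≤ 5 := by
        have h8 : (2:ℝ)^(n+3) = 8 * 2^n := by ring
        have := mul_le_mul_of_nonneg_right hub (le_of_lt hp)
        rw [h8] at this
        have he : 28 * ε / (27 * (8 * 2^n)) * 2^n = 28 * ε / 216 := by
          field_simp
          ring
        rw [he] at this
        nlinarith
      -- factorial
      have hF : (0:ℝ) < (Nat.factorial (n+1) : ℝ) := by positivity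
      have hFs : ((Nat.factorial (n+1+1) : ℕ) : ℝ) = ((n:ℝ) + 2) * (Nat.factorial (n+1) : ℝ) := by
        rw [Nat.factorial_succ]
        push_cast
        ring
      -- main chain
      rw [etaSeq_eq_kap]
      have hK18 : (0:ℝ) < 18 * K := by linarith
      rw [le_div_iff₀ hK18]
      refine le_of_mul_le_mul_right ?_ hpos
      set X : ℝ := 1/100 * (7*ε/9)^(n+1+2) / ((Nat.factorial (n+1+1) : ℕ) : ℝ) * (1 + 2/2^(n+1)) with hX
      have hX0 : 0 ≤ X := by positivity
      set G : ℝ := 1/100 * (7*ε/9)^(n+2) / (Nat.factorial (n+1) : ℝ) with hG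
      have hG0 : 0 < G := by positivity
      have hN2 : (0:ℝ) < (n:ℝ) + 2 := by positivity
      -- X expressed via G
      have hXG : X = 7 * ε * G * (1 + 1/2^n) / (9 * ((n:ℝ)+2)) := by
        rw [hX, hG, hFs, pow_succ]
        have h2p : (2:ℝ)^(n+1) = 2 * 2^n := by ring
        rw [h2p]
        field_simp
      -- algebraic core inequality
      have hAlg : (1 + 1/2^n) * (9*((n:ℝ)+2) + 5/2^n) ≤ 9*((n:ℝ)+2) * (1 + 2/2^n) := by
        have h5 : 5 * (2:ℝ)^n + 5 ≤ 9*((n:ℝ)+2) * 2^n := by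
          nlinarith [Nat.cast_nonneg (α := ℝ) n, (by norm_num : (1:ℝ) ≤ 2), one_le_pow₀ (by norm_num : (1:ℝ) ≤ 2) (n := n)]
        have key : (1 + 1/2^n) * (9*((n:ℝ)+2) + 5/2^n) * ((2:ℝ)^n)^2
            ≤ 9*((n:ℝ)+2) * (1 + 2/2^n) * ((2:ℝ)^n)^2 := by
          have e1 : (1 + 1/2^n) * (9*((n:ℝ)+2) + 5/2^n) * ((2:ℝ)^n)^2
              = (2^n + 1) * (9*((n:ℝ)+2)*2^n + 5) := by field_simp
          have e2 : 9*((n:ℝ)+2) * (1 + 2/2^n) * ((2:ℝ)^n)^2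
              = 9*((n:ℝ)+2) * (2^n + 2) * 2^n := by field_simp
          rw [e1, e2]
          nlinarith [h5, hp, Nat.cast_nonneg (α := ℝ) n]
        exact le_of_mul_le_mul_right key (by positivity)
      -- chain
      have s2 : 18 * K * h ≤ 9 * ((n:ℝ)+2) + 5/2^n := by
        have : 72 * h ≤ 5 / 2^n := by rw [le_div_iff₀ hp]; linarith
        nlinarith [hK2h]
      calc X * (18 * K) * h = X * (18 * K * h) := by ring
        _ ≤ X * (9 * ((n:ℝ)+2) + 5/2^n) := by
            refine mul_le_mul_of_nonneg_left ?_ hX0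
            exact s2
        _ = 7 * ε * G * ((1 + 1/2^n) * (9*((n:ℝ)+2) + 5/2^n)) / (9 * ((n:ℝ)+2)) := by
            rw [hXG]; ring
        _ ≤ 7 * ε * G * (9*((n:ℝ)+2) * (1 + 2/2^n)) / (9 * ((n:ℝ)+2)) := by
            apply div_le_div_of_nonneg_right ?_ (by positivity)
            exact mul_le_mul_of_nonneg_left hAlg (by positivity)
        _ = 7 * ε * (G * (1 + 2/2^n)) := by field_simp
        _ ≤ 7 * ε * h := by
            refine mul_le_mul_of_nonneg_left ?_ (by positivity)
            calc G * (1 + 2/2^n) = 1/100 * (7*ε/9)^(n+2) / (Nat.factorial (n+1) : ℝ) * (1 + 2/2^n) := by rw [hG]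
              _ ≤ h := ih
        _ = 7 * ε * h := rfl


/-- There is an absolute constant `c > 0` such that for every `0 < ε < 1/2` and every
`n ≥ 2`, `η_n(ε) ≥ c (7ε/9)^{n−1} / (n−2)!`. -/
theorem etaSeq_lower_bound :
    ∃ c : ℝ, 0 < c ∧ ∀ ε : ℝ, 0 < ε → ε < 1 / 2 → ∀ n : ℕ, 2 ≤ n →
      c * (7 * ε / 9) ^ (n - 1) / (Nat.factorial (n - 2) : ℝ) ≤ etaSeq n ε := by

  refine ⟨1/100, by norm_num, ?_⟩
  intro ε hε0 hε n hn
  obtain ⟨m, rfl⟩ : ∃ m, n = m + 2 := ⟨n - 2, by omega⟩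
  cases m with
  | zero =>
      show (1:ℝ)/100 * (7*ε/9)^(2-1) / (Nat.factorial (2-2) : ℝ) ≤ etaSeq 2 ε
      have h2 : etaSeq 2 ε = 7 * ε / 27 := rfl
      rw [h2]
      norm_num [Nat.factorial]
      nlinarith
  | succ k =>
      have hidx1 : k + 1 + 2 - 1 = k + 2 := rfl
      have hidx2 : k + 1 + 2 - 2 = k + 1 := rfl
      rw [hidx1, hidx2]
      have := etaSeq_claim hε0 hε k
      have hkp : (0:ℝ) < (2:ℝ)^k := by positivity
      have h1 : (1:ℝ) ≤ 1 + 2/2^k := by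
        have : (0:ℝ) < 2/2^k := by positivity
        linarith
      have hbase : (0:ℝ) ≤ 1/100 * (7*ε/9)^(k+2) / (Nat.factorial (k+1) : ℝ) := by positivity
      calc (1:ℝ)/100 * (7*ε/9)^(k+2) / (Nat.factorial (k+1) : ℝ)
          ≤ 1/100 * (7*ε/9)^(k+2) / (Nat.factorial (k+1) : ℝ) * (1 + 2/2^k) :=
            le_mul_of_one_le_right hbase h1
        _ ≤ etaSeq (k+1+2) ε := this
end

section
/- For all integers n > m ≥ 1, the identity (Y^m − 1)^n − Y^{mn} = Π_{ξ : ξ^n = 1} ( (1 − ξ) Y^m − 1 ) holds in C[Y], where the product ranges over the n-th roots of unity ξ in C; moreover this polynomial is squarefree and its factors (1 − ξ)Y^m − 1 are pairwise coprime. -/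
open Polynomial

/-- In `ℂ[Y]`: `(Y^m − 1)^n − Y^{mn} = ∏_{ξ^n = 1} ((1 − ξ) Y^m − 1)`, the product being
over the `n`-th roots of unity in `ℂ`; moreover this polynomial is squarefree and the
factors `(1 − ξ) Y^m − 1` are pairwise coprime. -/
theorem factorization_squarefree_coprime (m n : ℕ) (hm : 1 ≤ m) (hmn : m < n) :
    ((X ^ m - 1 : Polynomial ℂ) ^ n - X ^ (m * n)
        = ∏ ξ ∈ Polynomial.nthRootsFinset n (1 : ℂ), (C (1 - ξ) * X ^ m - 1))
      ∧ Squarefree ((X ^ m - 1 : Polynomial ℂ) ^ n - X ^ (m * n))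
      ∧ ∀ ξ ζ : ℂ, ξ ^ n = 1 → ζ ^ n = 1 → ξ ≠ ζ →
          IsCoprime (C (1 - ξ) * X ^ m - 1 : Polynomial ℂ) (C (1 - ζ) * X ^ m - 1) := by
  have hn : 0 < n := by omega
  obtain ⟨ζ₀, hζ₀⟩ : ∃ ζ₀ : ℂ, IsPrimitiveRoot ζ₀ n :=
    ⟨_, Complex.isPrimitiveRoot_exp n hn.ne'⟩
  -- coprimality
  have hcop : ∀ ξ ζ : ℂ, ξ ≠ ζ →
      IsCoprime (C (1 - ξ) * X ^ m - 1 : Polynomial ℂ) (C (1 - ζ) * X ^ m - 1) := by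
    intro ξ ζ hne
    have hd : (ζ - ξ : ℂ) ≠ 0 := sub_ne_zero.2 (Ne.symm hne)
    refine ⟨C ((1 - ζ) * (ζ - ξ)⁻¹), -C ((1 - ξ) * (ζ - ξ)⁻¹), ?_⟩
    have : ((1 - ζ) * (ζ - ξ)⁻¹ * (1 - ξ) - (1 - ξ) * (ζ - ξ)⁻¹ * (1 - ζ) : ℂ) = 0 := by ring
    calc C ((1 - ζ) * (ζ - ξ)⁻¹) * (C (1 - ξ) * X ^ m - 1)
          + -C ((1 - ξ) * (ζ - ξ)⁻¹) * (C (1 - ζ) * X ^ m - 1)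
        = C (((1 - ζ) * (ζ - ξ)⁻¹ * (1 - ξ) - (1 - ξ) * (ζ - ξ)⁻¹ * (1 - ζ))) * X ^ m
            + C ((1 - ξ) * (ζ - ξ)⁻¹ - (1 - ζ) * (ζ - ξ)⁻¹) := by
          simp only [map_sub, map_mul]; ring
      _ = 1 := by
          rw [this]
          have : ((1 - ξ) * (ζ - ξ)⁻¹ - (1 - ζ) * (ζ - ξ)⁻¹ : ℂ) = 1 := by
            field_simp
            ring
          rw [this]; simp
  -- the identity
  have hid : ((X ^ m - 1 : Polynomial ℂ) ^ n - X ^ (m * n)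
      = ∏ ξ ∈ Polynomial.nthRootsFinset n (1 : ℂ), (C (1 - ξ) * X ^ m - 1)) := by
    apply Polynomial.funext
    intro x
    have h := hζ₀.pow_sub_pow_eq_prod_sub_mul (x ^ m - 1) (x ^ m) hn
    simp only [eval_sub, eval_pow, eval_X, eval_one, eval_prod, eval_mul, eval_C,
      pow_mul]
    rw [h]
    exact Finset.prod_congr rfl fun ξ _ => by ring
  refine ⟨hid, ?_, fun ξ ζ _ _ hne => hcop ξ ζ hne⟩
  -- squarefree
  rw [hid]
  have hsep : (∏ ξ ∈ Polynomial.nthRootsFinset n (1 : ℂ), (C (1 - ξ) * X ^ m - 1)).Separable := by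
    apply Polynomial.separable_prod'
    · intro ξ hξ ζ hζ hne
      exact hcop ξ ζ hne
    · intro ξ hξ
      by_cases h1 : ξ = 1
      · subst h1
        have : (C (1 - (1:ℂ)) * X ^ m - 1 : Polynomial ℂ) = C (-1) := by simp
        rw [this]
        exact (separable_C _).2 (by simp)
      · have hc : (1 - ξ : ℂ) ≠ 0 := sub_ne_zero.2 (Ne.symm h1)
        have heq : (C (1 - ξ) * X ^ m - 1 : Polynomial ℂ)
            = C (1 - ξ) * (X ^ m - C (1 - ξ)⁻¹) := by
          rw [mul_sub, ← map_mul, mul_inv_cancel₀ hc, map_one]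
        rw [heq]
        have hcop' : IsCoprime (C (1 - ξ) : Polynomial ℂ) (X ^ m - C (1 - ξ)⁻¹) :=
          ⟨C (1 - ξ)⁻¹, 0, by rw [zero_mul, add_zero, ← map_mul, inv_mul_cancel₀ hc, map_one]⟩
        exact ((separable_C _).2 hc.isUnit).mul
          (separable_X_pow_sub_C ((1 - ξ)⁻¹) (by exact_mod_cast Nat.cast_ne_zero.2 (by omega : m ≠ 0) : (m:ℂ) ≠ 0) (inv_ne_zero hc)) hcop'
  exact hsep.squarefree
end
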